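/- arXiv:2511.17320 — 2 statements merged into one kernel-verified Lean document; each statement's English description precedes it below -/
import Mathlib

section
/- Let a, b ∈ ℂ⟦z⟧ be formal power series with a ≠ 0, constant coefficient a(0) = 0, and z·a' = a·b². Then the square of the constant coefficient of b equals the order of a, i.e. (b(0))² = ord(a) as complex numbers (ord(a) being a finite positive natural number); in particular b(0) ≠ 0. (This is the reduced-base content of the 'R to R' case of the proposition on local superconformal maps: combined with the twist condition forcing b(0) = 0 whenever the ramification order exceeds 1, it shows that every R-to-R superconformal map is unramified.) -/
open PowerSeries

/-- **R to R case of the local superconformal map proposition (reduced base).**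
If `a, b ∈ ℂ⟦z⟧` with `a ≠ 0`, `a(0) = 0` and `z·a' = a·b²`, then `ord a` is a
finite positive natural number `n` and `(b(0))² = n` as complex numbers; in
particular `b(0) ≠ 0`. -/
theorem r_to_r_unramified (a b : PowerSeries ℂ)
    (ha : a ≠ 0)
    (h0 : constantCoeff (R := ℂ) a = 0)
    (h : X * derivative ℂ a = a * b ^ 2) :
    ∃ n : ℕ, 0 < n ∧ a.order = (n : ℕ∞) ∧
      (constantCoeff (R := ℂ) b) ^ 2 = (n : ℂ) ∧ constantCoeff (R := ℂ) b ≠ 0 := by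
  have hfin : a.order < ⊤ := PowerSeries.order_finite_iff_ne_zero.mpr ha
  cases ho : a.order with
  | top => simp [ho] at hfin
  | coe n =>
    obtain ⟨hc, hlt⟩ := PowerSeries.order_eq_nat.mp ho
    have hn : 0 < n := by
      rcases Nat.eq_zero_or_pos n with h' | h'
      · subst h'
        rw [PowerSeries.coeff_zero_eq_constantCoeff] at hc
        exact absurd h0 hc
      · exact h'
    obtain ⟨m, rfl⟩ := Nat.exists_eq_add_of_lt hn
    rw [zero_add] at *
    have key := congrArg (PowerSeries.coeff (R := ℂ) (m + 1)) h
    rw [PowerSeries.coeff_succ_X_mul, PowerSeries.coeff_derivative,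
      PowerSeries.coeff_mul] at key
    rw [Finset.sum_eq_single (m + 1, 0)] at key
    · simp only [PowerSeries.coeff_zero_eq_constantCoeff, map_pow] at key
      have hb2 : (constantCoeff (R := ℂ) b) ^ 2 = ((m : ℂ) + 1) :=
        (mul_left_cancel₀ hc key).symm
      refine ⟨m + 1, hn, by exact_mod_cast rfl, by push_cast; exact hb2, ?_⟩
      intro hb
      rw [hb] at hb2
      have : (m : ℂ) + 1 ≠ 0 := Nat.cast_add_one_ne_zero m
      simp_all
    · rintro ⟨i, j⟩ hij hne
      rw [Finset.HasAntidiagonal.mem_antidiagonal] at hij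
      have hi : i < m + 1 := by
        rcases Nat.lt_or_ge i (m+1) with h' | h'
        · exact h'
        · exfalso; apply hne
          have hi' : i = m + 1 := by omega
          have hj : j = 0 := by omega
          simp [hi', hj]
      rw [hlt i hi, zero_mul]
    · intro hmem
      exact absurd (Finset.HasAntidiagonal.mem_antidiagonal.mpr (by simp)) hmem
end

section
/- Let W = { h ∈ ℂ((z)) : coeff_{−1}(h) = 0 } be the ℂ-subspace of residueless formal Laurent series. For h, k ∈ W define E(h,k) = ∑_{m ∈ ℤ, m ≠ 0} (1/m)·coeff_{−m−1}(h)·coeff_{m−1}(k). Then: (i) for each h, k only finitely many terms of this sum are nonzero, so E is a well-defined ℂ-bilinear form on W; (ii) E is alternating: E(h,k) = −E(k,h) for all h, k ∈ W; (iii) E is nondegenerate on W: if h ∈ W satisfies E(h,k) = 0 for all k ∈ W, then h = 0. (This is the even component, in coordinates, of the super Givental pairing ⟨[df],[dg]⟩ = Res_{z=0}[df·g] of the super Givental pairing proposition: it realizes the pairing ⟨[df],[dg]⟩ = Res(f'·g) on residueless elements h = f', k = g'.) -/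
/-- The even component, in coordinates, of the super Givental pairing:
`E(h,k) = ∑_{m ≠ 0} (1/m) · coeff (-m-1) h · coeff (m-1) k`. -/
noncomputable def giventalPairing (h k : LaurentSeries ℂ) : ℂ :=
  ∑ᶠ m : ℤ, if m = 0 then 0 else (m : ℂ)⁻¹ * h.coeff (-m - 1) * k.coeff (m - 1)

private lemma isWF_bddBelow {s : Set ℤ} (hs : s.IsWF) : BddBelow s := by
  rcases s.eq_empty_or_nonempty with rfl | hn
  · exact bddBelow_empty
  · exact ⟨hs.min hn, fun a ha => hs.min_le hn ha⟩

private lemma givental_support_finite (h k : LaurentSeries ℂ) :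
    (Function.support fun m : ℤ =>
      if m = 0 then 0 else (m : ℂ)⁻¹ * h.coeff (-m - 1) * k.coeff (m - 1)).Finite := by
  obtain ⟨a, ha⟩ := isWF_bddBelow h.isWF_support
  obtain ⟨b, hb⟩ := isWF_bddBelow k.isWF_support
  apply Set.Finite.subset (Set.finite_Icc (b + 1) (-a - 1))
  intro m hm
  simp only [Function.mem_support] at hm
  by_cases hm0 : m = 0
  · simp [hm0] at hm
  rw [if_neg hm0] at hm
  have h1 : h.coeff (-m - 1) ≠ 0 := fun H => hm (by rw [H]; ring)
  have h2 : k.coeff (m - 1) ≠ 0 := fun H => hm (by rw [H]; ring)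
  have ha' : a ≤ -m - 1 := ha h1
  have hb' : b ≤ m - 1 := hb h2
  exact Set.mem_Icc.2 ⟨by omega, by omega⟩

/-- **Even component of the super Givental pairing proposition.**
On the space `W` of residueless formal Laurent series, the sum defining
`E(h,k) = ∑_{m ≠ 0} (1/m)·coeff(-m-1)(h)·coeff(m-1)(k)` has finitely many
nonzero terms, `E` is ℂ-bilinear, alternating on `W`, and nondegenerate on `W`. -/
theorem givental_pairing_properties :
    (∀ h k : LaurentSeries ℂ,
      (Function.support fun m : ℤ =>
        if m = 0 then 0 else (m : ℂ)⁻¹ * h.coeff (-m - 1) * k.coeff (m - 1)).Finite) ∧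
    (∀ h₁ h₂ k : LaurentSeries ℂ,
      giventalPairing (h₁ + h₂) k = giventalPairing h₁ k + giventalPairing h₂ k) ∧
    (∀ (c : ℂ) (h k : LaurentSeries ℂ),
      giventalPairing (c • h) k = c * giventalPairing h k) ∧
    (∀ h k₁ k₂ : LaurentSeries ℂ,
      giventalPairing h (k₁ + k₂) = giventalPairing h k₁ + giventalPairing h k₂) ∧
    (∀ (c : ℂ) (h k : LaurentSeries ℂ),
      giventalPairing h (c • k) = c * giventalPairing h k) ∧
    (∀ h k : LaurentSeries ℂ, h.coeff (-1) = 0 → k.coeff (-1) = 0 →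
      giventalPairing h k = -giventalPairing k h) ∧
    (∀ h : LaurentSeries ℂ, h.coeff (-1) = 0 →
      (∀ k : LaurentSeries ℂ, k.coeff (-1) = 0 → giventalPairing h k = 0) → h = 0) := by
  refine ⟨givental_support_finite, ?_, ?_, ?_, ?_, ?_, ?_⟩
  · intro h₁ h₂ k
    unfold giventalPairing
    rw [← finsum_add_distrib (givental_support_finite h₁ k) (givental_support_finite h₂ k)]
    congr 1; funext m
    by_cases hm : m = 0
    · simp [hm]
    · simp only [if_neg hm, HahnSeries.coeff_add]; ring
  · intro c h k
    unfold giventalPairing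
    rw [mul_finsum]
    congr 1; funext m
    by_cases hm : m = 0
    · simp [hm]
    · simp only [if_neg hm, HahnSeries.coeff_smul, smul_eq_mul]; ring
  · intro h k₁ k₂
    unfold giventalPairing
    rw [← finsum_add_distrib (givental_support_finite h k₁) (givental_support_finite h k₂)]
    congr 1; funext m
    by_cases hm : m = 0
    · simp [hm]
    · simp only [if_neg hm, HahnSeries.coeff_add]; ring
  · intro c h k
    unfold giventalPairing
    rw [mul_finsum]
    congr 1; funext m
    by_cases hm : m = 0
    · simp [hm]
    · simp only [if_neg hm, HahnSeries.coeff_smul, smul_eq_mul]; ring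
  · intro h k _ _
    unfold giventalPairing
    rw [← finsum_comp_equiv (Equiv.neg ℤ)
      (f := fun m : ℤ => if m = 0 then 0 else (m : ℂ)⁻¹ * k.coeff (-m - 1) * h.coeff (m - 1)),
      ← finsum_neg_distrib]
    congr 1; funext m
    simp only [Equiv.neg_apply]
    by_cases hm : m = 0
    · simp [hm]
    · rw [if_neg hm, if_neg (neg_ne_zero.2 hm), Int.cast_neg, inv_neg, neg_neg]
      ring
  · intro h hres hyp
    apply HahnSeries.ext
    funext n
    rw [HahnSeries.coeff_zero]
    by_cases hn : n = -1
    · rw [hn]; exact hres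
    · set m : ℤ := -n - 2 with hmdef
      have hk : (HahnSeries.single m (1 : ℂ)).coeff (-1) = 0 :=
        HahnSeries.coeff_single_of_ne (by omega)
      have hE := hyp (HahnSeries.single m (1 : ℂ)) hk
      unfold giventalPairing at hE
      rw [finsum_eq_single _ (m + 1)] at hE
      · have hne : m + 1 ≠ 0 := by omega
        rw [if_neg hne] at hE
        have hcoef : (HahnSeries.single m (1 : ℂ)).coeff (m + 1 - 1) = 1 := by
          rw [show m + 1 - 1 = m by ring, HahnSeries.coeff_single_same]
        rw [hcoef, mul_one, show -(m + 1) - 1 = n by omega] at hE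
        have hcast : ((m + 1 : ℤ) : ℂ) ≠ 0 := Int.cast_ne_zero.2 hne
        have := mul_eq_zero.1 hE
        rcases this with H | H
        · exact absurd H (inv_ne_zero hcast)
        · exact H
      · intro x hx
        by_cases hx0 : x = 0
        · simp [hx0]
        · rw [if_neg hx0, HahnSeries.coeff_single_of_ne (by omega), mul_zero]
end
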